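/- Let B ⊆ ℝ^p be a nonempty closed convex set with metric (Euclidean) projection P_B, let β*, β ∈ B, let g ∈ ℝ^p be nonzero, let ε > 0, and let J ∈ (0,1]. If ⟨g, β* − β⟩ ≥ √ε · ‖g‖, then the updated point β⁺ := P_B(β + (J√ε/‖g‖)·g) satisfies ‖β⁺ − β*‖² ≤ ‖β − β*‖² − J·ε, where ⟨·,·⟩ and ‖·‖ are the Euclidean inner product and norm. -/

import Mathlib

open scoped RealInnerProductSpace

/-- **One-step contraction for the normalized (gradient-norm-rescaled) projected ascent step
(proof of Lemma C.8).**
Let `B ⊆ ℝ^p` be nonempty, closed and convex, `β*, β ∈ B`, `g ≠ 0`, `ε > 0`, `J ∈ (0,1]`.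
If `⟨g, β* - β⟩ ≥ √ε ‖g‖`, then the metric projection `β⁺` of `β + (J√ε/‖g‖) g` onto `B`
satisfies `‖β⁺ - β*‖² ≤ ‖β - β*‖² - J ε`. Here the metric projection is encoded by the property
that `β⁺ ∈ B` minimizes the distance to the updated point over `B`. -/
theorem stmt7 (p : ℕ) (B : Set (EuclideanSpace ℝ (Fin p)))
    (hBne : B.Nonempty) (hBclosed : IsClosed B) (hBconvex : Convex ℝ B)
    (βstar β : EuclideanSpace ℝ (Fin p)) (hβstar : βstar ∈ B) (hβ : β ∈ B)
    (g : EuclideanSpace ℝ (Fin p)) (hg : g ≠ 0)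
    (ε J : ℝ) (hε : 0 < ε) (hJ0 : 0 < J) (hJ1 : J ≤ 1)
    (hprog : Real.sqrt ε * ‖g‖ ≤ ⟪g, βstar - β⟫)
    (βplus : EuclideanSpace ℝ (Fin p)) (hβplusmem : βplus ∈ B)
    (hproj : ∀ x ∈ B, ‖βplus - (β + (J * Real.sqrt ε / ‖g‖) • g)‖
      ≤ ‖x - (β + (J * Real.sqrt ε / ‖g‖) • g)‖) :
    ‖βplus - βstar‖ ^ 2 ≤ ‖β - βstar‖ ^ 2 - J * ε := by
  set η : ℝ := J * Real.sqrt ε / ‖g‖ with hη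
  set y : EuclideanSpace ℝ (Fin p) := β + η • g with hy
  have hgnorm : (0:ℝ) < ‖g‖ := norm_pos_iff.mpr hg
  have hsqrt : 0 < Real.sqrt ε := Real.sqrt_pos.mpr hε
  -- βplus attains the infimum of distances to y
  have hinf : ‖y - βplus‖ = ⨅ w : B, ‖y - w‖ := by
    haveI : Nonempty B := ⟨⟨βplus, hβplusmem⟩⟩
    apply le_antisymm
    · apply le_ciInf
      intro w
      have := hproj w w.2
      rw [norm_sub_rev, norm_sub_rev (w:EuclideanSpace ℝ (Fin p))] at this
      exact this
    · have hbdd : BddBelow (Set.range fun w : B => ‖y - (w : EuclideanSpace ℝ (Fin p))‖) := by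
        refine ⟨0, ?_⟩
        rintro _ ⟨w, rfl⟩
        exact norm_nonneg _
      exact ciInf_le hbdd ⟨βplus, hβplusmem⟩
  have hVI : ⟪y - βplus, βstar - βplus⟫ ≤ 0 :=
    ((norm_eq_iInf_iff_real_inner_le_zero hBconvex hβplusmem).mp hinf) βstar hβstar
  -- nonexpansiveness consequence: ‖βplus - βstar‖² ≤ ‖y - βstar‖²
  have hstep1 : ‖βplus - βstar‖ ^ 2 ≤ ‖y - βstar‖ ^ 2 := by
    have expand : ‖y - βstar‖ ^ 2
        = ‖y - βplus‖ ^ 2 + 2 * ⟪y - βplus, βplus - βstar⟫ + ‖βplus - βstar‖ ^ 2 := by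
      have : y - βstar = (y - βplus) + (βplus - βstar) := by abel
      rw [this, norm_add_sq_real]
    have h2 : 0 ≤ ⟪y - βplus, βplus - βstar⟫ := by
      have : βplus - βstar = -(βstar - βplus) := by abel
      rw [this, inner_neg_right]
      linarith
    nlinarith [sq_nonneg ‖y - βplus‖]
  -- expand ‖y - βstar‖²
  have expand2 : ‖y - βstar‖ ^ 2
      = ‖β - βstar‖ ^ 2 + 2 * η * ⟪β - βstar, g⟫ + η ^ 2 * ‖g‖ ^ 2 := by
    have : y - βstar = (β - βstar) + η • g := by rw [hy]; abel
    rw [this, norm_add_sq_real, real_inner_smul_right, norm_smul, Real.norm_eq_abs,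
      mul_pow, sq_abs]
    ring
  have hη_pos : 0 < η := by positivity
  have hηg : η * ‖g‖ = J * Real.sqrt ε := by
    rw [hη, div_mul_cancel₀ _ hgnorm.ne']
  have hinner : ⟪β - βstar, g⟫ ≤ -(Real.sqrt ε * ‖g‖) := by
    have : β - βstar = -(βstar - β) := by abel
    rw [this, inner_neg_left, real_inner_comm]
    linarith
  have hsq : Real.sqrt ε ^ 2 = ε := Real.sq_sqrt hε.le
  have key : ‖y - βstar‖ ^ 2 ≤ ‖β - βstar‖ ^ 2 - J * ε := by
    rw [expand2]
    have h1 : 2 * η * ⟪β - βstar, g⟫ ≤ -(2 * (J * ε)) := by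
      have := mul_le_mul_of_nonneg_left hinner (by positivity : (0:ℝ) ≤ 2 * η)
      calc 2 * η * ⟪β - βstar, g⟫ ≤ 2 * η * -(Real.sqrt ε * ‖g‖) := this
        _ = -(2 * (J * Real.sqrt ε * Real.sqrt ε)) := by
            rw [← hηg]; ring
        _ = -(2 * (J * ε)) := by rw [mul_assoc J, ← sq, hsq]
    have h2 : η ^ 2 * ‖g‖ ^ 2 = J ^ 2 * ε := by
      have : η ^ 2 * ‖g‖ ^ 2 = (η * ‖g‖) ^ 2 := by ring
      rw [this, hηg, mul_pow, hsq]
    rw [h2]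
    nlinarith [mul_nonneg (mul_nonneg hJ0.le (sub_nonneg.mpr hJ1)) hε.le]
  linarith
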